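/- For z = x + yi in the open unit disc with a = |z - A₀|, b = |z - B₀|, c = |z - C₀|, the value φ(△(a,b,c)) := (-2a² + b² + c² + √3(b²-c²)i) / (a² + b² + c² + √3·√(-a⁴-b⁴-c⁴+2a²b²+2b²c²+2c²a²)) equals y + xi = i·z̄. -/

import Mathlib

open Complex

noncomputable def A0 : ℂ := Complex.I
noncomputable def B0 : ℂ := -Complex.exp ((Real.pi : ℂ) * Complex.I / 6)
noncomputable def C0 : ℂ := Complex.exp (-((Real.pi : ℂ) * Complex.I) / 6)

lemma B0_eq : B0 = -((Real.sqrt 3 / 2 : ℝ) : ℂ) - ((1/2 : ℝ) : ℂ) * Complex.I := by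
  have h : ((Real.pi : ℂ) * Complex.I / 6) = ((Real.pi / 6 : ℝ) : ℂ) * Complex.I := by
    push_cast; ring
  rw [B0, h, Complex.exp_mul_I]
  rw [show Complex.cos ((Real.pi/6 : ℝ):ℂ) = ((Real.cos (Real.pi/6) : ℝ):ℂ) from (Complex.ofReal_cos _).symm,
     show Complex.sin ((Real.pi/6 : ℝ):ℂ) = ((Real.sin (Real.pi/6) : ℝ):ℂ) from (Complex.ofReal_sin _).symm]
  rw [Real.cos_pi_div_six, Real.sin_pi_div_six]
  push_cast; ring

lemma C0_eq : C0 = ((Real.sqrt 3 / 2 : ℝ) : ℂ) - ((1/2 : ℝ) : ℂ) * Complex.I := by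
  have h : (-((Real.pi : ℂ) * Complex.I) / 6) = ((-(Real.pi / 6) : ℝ) : ℂ) * Complex.I := by
    push_cast; ring
  rw [C0, h, Complex.exp_mul_I]
  rw [show Complex.cos ((-(Real.pi/6) : ℝ):ℂ) = ((Real.cos (-(Real.pi/6)) : ℝ):ℂ) from (Complex.ofReal_cos _).symm,
     show Complex.sin ((-(Real.pi/6) : ℝ):ℂ) = ((Real.sin (-(Real.pi/6)) : ℝ):ℂ) from (Complex.ofReal_sin _).symm]
  rw [Real.cos_neg, Real.sin_neg, Real.cos_pi_div_six, Real.sin_pi_div_six]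
  push_cast; ring

/-- The key computation: the Pompeiu moduli map and the shape-function moduli map
differ by z ↦ i * conj z. -/
theorem stmt_13 (x y : ℝ) (a b c : ℝ)
    (hz : ‖(x : ℂ) + (y : ℂ) * Complex.I‖ < 1)
    (ha : a = ‖(x : ℂ) + (y : ℂ) * Complex.I - A0‖)
    (hb : b = ‖(x : ℂ) + (y : ℂ) * Complex.I - B0‖)
    (hc : c = ‖(x : ℂ) + (y : ℂ) * Complex.I - C0‖) :
    (((-2 * a ^ 2 + b ^ 2 + c ^ 2 : ℝ) : ℂ) +
          ((Real.sqrt 3 * (b ^ 2 - c ^ 2) : ℝ) : ℂ) * Complex.I) /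
        (((a ^ 2 + b ^ 2 + c ^ 2 + Real.sqrt 3 *
            Real.sqrt (-a ^ 4 - b ^ 4 - c ^ 4 + 2 * a ^ 2 * b ^ 2 + 2 * b ^ 2 * c ^ 2 +
              2 * c ^ 2 * a ^ 2) : ℝ) : ℂ)) = (y : ℂ) + (x : ℂ) * Complex.I ∧
    (y : ℂ) + (x : ℂ) * Complex.I =
      Complex.I * (starRingEnd ℂ) ((x : ℂ) + (y : ℂ) * Complex.I) := by
  set s := Real.sqrt 3 with hs
  have hs2 : s ^ 2 = 3 := Real.sq_sqrt (by norm_num)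
  have ha2 : a ^ 2 = x ^ 2 + y ^ 2 - 2 * y + 1 := by
    rw [ha, ← Complex.normSq_eq_norm_sq, A0]
    simp [Complex.normSq_apply, Complex.ext_iff]
    ring
  have hb2 : b ^ 2 = x ^ 2 + y ^ 2 + s * x + y + 1 := by
    rw [hb, ← Complex.normSq_eq_norm_sq, B0_eq]
    simp [Complex.normSq_apply, Complex.ext_iff]
    nlinarith [hs2]
  have hc2 : c ^ 2 = x ^ 2 + y ^ 2 - s * x + y + 1 := by
    rw [hc, ← Complex.normSq_eq_norm_sq, C0_eq]
    simp [Complex.normSq_apply, Complex.ext_iff]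
    nlinarith [hs2]
  have hr : x ^ 2 + y ^ 2 < 1 := by
    have := Complex.sq_norm ((x : ℂ) + (y : ℂ) * Complex.I)
    have h1 : ‖(x : ℂ) + (y : ℂ) * Complex.I‖ ^ 2 < 1 := by
      nlinarith [norm_nonneg ((x : ℂ) + (y : ℂ) * Complex.I)]
    rw [this] at h1
    simpa [Complex.normSq_apply, sq] using h1
  have hrad : -a ^ 4 - b ^ 4 - c ^ 4 + 2 * a ^ 2 * b ^ 2 + 2 * b ^ 2 * c ^ 2 +
      2 * c ^ 2 * a ^ 2 = 3 * (1 - (x ^ 2 + y ^ 2)) ^ 2 := by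
    rw [show (-a ^ 4 - b ^ 4 - c ^ 4 + 2 * a ^ 2 * b ^ 2 + 2 * b ^ 2 * c ^ 2 +
        2 * c ^ 2 * a ^ 2 : ℝ) = -(a ^ 2) ^ 2 - (b ^ 2) ^ 2 - (c ^ 2) ^ 2 + 2 * (a ^ 2) * (b ^ 2)
        + 2 * (b ^ 2) * (c ^ 2) + 2 * (c ^ 2) * (a ^ 2) by ring, ha2, hb2, hc2]
    linear_combination (-4 * x ^ 2) * hs2
  have hsqrt : Real.sqrt (-a ^ 4 - b ^ 4 - c ^ 4 + 2 * a ^ 2 * b ^ 2 + 2 * b ^ 2 * c ^ 2 +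
      2 * c ^ 2 * a ^ 2) = s * (1 - (x ^ 2 + y ^ 2)) := by
    rw [hrad, show (3 : ℝ) * (1 - (x ^ 2 + y ^ 2)) ^ 2 = (s * (1 - (x ^ 2 + y ^ 2))) ^ 2 by
      nlinarith [hs2]]
    exact Real.sqrt_sq (by nlinarith [Real.sqrt_nonneg 3])
  have hden : a ^ 2 + b ^ 2 + c ^ 2 + s * Real.sqrt (-a ^ 4 - b ^ 4 - c ^ 4 +
      2 * a ^ 2 * b ^ 2 + 2 * b ^ 2 * c ^ 2 + 2 * c ^ 2 * a ^ 2) = 6 := by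
    rw [hsqrt, ha2, hb2, hc2]; linear_combination (1 - x ^ 2 - y ^ 2) * hs2
  have hnum1 : -2 * a ^ 2 + b ^ 2 + c ^ 2 = 6 * y := by linarith [ha2, hb2, hc2]
  have hnum2 : s * (b ^ 2 - c ^ 2) = 6 * x := by
    rw [hb2, hc2]; linear_combination (2 * x) * hs2
  constructor
  · rw [hnum1, hnum2, hden]
    push_cast
    rw [div_eq_iff (by norm_num : (6:ℂ) ≠ 0)]
    ring
  · simp [Complex.ext_iff]
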